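/- Let λ = (k, −l) ∈ ℤ². For every m ∈ ℤ, x(m)(λ) = (p(m+1), −p(m)) if m is even, and x(m)(λ) = (−p(m), p(m+1)) if m is odd. -/

import Mathlib

/-- Simple reflection `r1 : (x, y) ↦ (-x, y + b x)` on the weight lattice `ℤ × ℤ`. -/
def r1 (b : ℤ) : Equiv.Perm (ℤ × ℤ) :=
  Function.Involutive.toPerm (fun v => (-v.1, v.2 + b * v.1))
    (fun v => by simp [Prod.ext_iff])

/-- Simple reflection `r2 : (x, y) ↦ (x + a y, -y)` on the weight lattice `ℤ × ℤ`. -/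
def r2 (a : ℤ) : Equiv.Perm (ℤ × ℤ) :=
  Function.Involutive.toPerm (fun v => (v.1 + a * v.2, -v.2))
    (fun v => by simp [Prod.ext_iff])

/-- The Weyl group `W`, the group of bijections of `ℤ × ℤ` generated by `r1` and `r2`. -/
def W (a b : ℤ) : Subgroup (Equiv.Perm (ℤ × ℤ)) :=
  Subgroup.closure {r1 b, r2 a}

/-- The `W`-orbit of a point `v ∈ ℤ × ℤ`. -/
def Worbit (a b : ℤ) (v : ℤ × ℤ) : Set (ℤ × ℤ) :=
  {w : ℤ × ℤ | ∃ g ∈ W a b, g v = w}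

/-- The set of dominant integral weights `P⁺`. -/
def Pplus : Set (ℤ × ℤ) := {v : ℤ × ℤ | 0 ≤ v.1 ∧ 0 ≤ v.2}

/-- The set of antidominant integral weights `-P⁺`. -/
def Pminus : Set (ℤ × ℤ) := {v : ℤ × ℤ | v.1 ≤ 0 ∧ v.2 ≤ 0}


/-- `pSeq a b k l p` says that `p : ℤ → ℤ` is the (unique) sequence with `p 0 = l`,
`p 1 = k`, and `p (m+2) = b * p (m+1) - p m` for even `m`,
`p (m+2) = a * p (m+1) - p m` for odd `m`. -/
def pSeq (a b k l : ℤ) (p : ℤ → ℤ) : Prop :=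
  p 0 = l ∧ p 1 = k ∧
    ∀ m : ℤ, p (m + 2) = (if Even m then b else a) * p (m + 1) - p m

theorem xm_apply (a b : ℤ) (ha : 2 ≤ a) (hb : 2 ≤ b) (hab : 4 < a * b)
    (k l : ℤ) (p : ℤ → ℤ) (hp : pSeq a b k l p)
    (x : ℤ → Equiv.Perm (ℤ × ℤ)) (hx0 : x 0 = 1)
    (hx : ∀ m : ℤ, x m = (if Even m then r2 a else r1 b) * x (m - 1)) :
    ∀ m : ℤ,
      x m (k, -l) = if Even m then (p (m + 1), -p m) else (-p m, p (m + 1)) := by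
  obtain ⟨hp0, hp1, hrec⟩ := hp
  intro m
  induction m using Int.induction_on with
  | zero => simp [hx0, hp0, hp1]
  | succ n ih =>
    have hxn := hx ((n : ℤ) + 1)
    simp only [add_sub_cancel_right] at hxn
    have e2 : ((n : ℤ) + 1 + 1) = (n : ℤ) + 2 := by ring
    have h2 := hrec (n : ℤ)
    by_cases hn : Even (n : ℤ)
    · have hodd : ¬ Even ((n : ℤ) + 1) := fun h => Int.even_add_one.mp h hn
      rw [if_pos hn] at ih h2
      rw [hxn]; simp only [if_neg hodd]; rw [Equiv.Perm.mul_apply, ih, e2]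
      simp only [r1, Function.Involutive.toPerm, Equiv.coe_fn_mk, Prod.ext_iff]
      constructor <;> first | trivial | linarith
    · have heven : Even ((n : ℤ) + 1) := Int.even_add_one.mpr hn
      rw [if_neg hn] at ih h2
      rw [hxn]; simp only [if_pos heven]; rw [Equiv.Perm.mul_apply, ih, e2]
      simp only [r2, Function.Involutive.toPerm, Equiv.coe_fn_mk, Prod.ext_iff]
      constructor <;> first | trivial | linarith
  | pred n ih =>
    have hxn := hx (-(n : ℤ))
    have h2 := hrec (-(n : ℤ) - 1)
    have e1 : (-(n : ℤ) - 1 + 2) = -(n : ℤ) + 1 := by ring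
    have e2 : (-(n : ℤ) - 1 + 1) = -(n : ℤ) := by ring
    rw [e1, e2] at h2
    by_cases hn : Even (-(n : ℤ))
    · have hodd : ¬ Even (-(n : ℤ) - 1) := fun h => Int.even_sub_one.mp h hn
      have hstep : x (-(n : ℤ) - 1) (k, -l) = r2 a (x (-(n : ℤ)) (k, -l)) := by
        rw [hxn, if_pos hn, Equiv.Perm.mul_apply]
        simp [r2, Function.Involutive.toPerm]
      rw [if_pos hn] at ih
      rw [if_neg hodd] at h2 ⊢
      rw [hstep, ih, e2]
      simp only [r2, Function.Involutive.toPerm, Equiv.coe_fn_mk, Prod.ext_iff]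
      constructor <;> first | trivial | linarith
    · have heven : Even (-(n : ℤ) - 1) := Int.even_sub_one.mpr hn
      have hstep : x (-(n : ℤ) - 1) (k, -l) = r1 b (x (-(n : ℤ)) (k, -l)) := by
        rw [hxn, if_neg hn, Equiv.Perm.mul_apply]
        simp [r1, Function.Involutive.toPerm]
      rw [if_neg hn] at ih
      rw [if_pos heven] at h2 ⊢
      rw [hstep, ih, e2]
      simp only [r1, Function.Involutive.toPerm, Equiv.coe_fn_mk, Prod.ext_iff]
      constructor <;> first | trivial | linarith
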